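/- For a ≡ 0 or 2 (mod 6) and b odd, f(a,b) ≥ (b−1)·C_*(a) + C(a), where C_*(a) = (2a²−a)/12 and C(a) = ceil((a/3)·ceil((a−1)/2)) is the minimum size of an (a,3,2)-covering design. -/

import Mathlib

open Finset

/-- `T` is a family of 3-element subsets of `A`. -/
def IsTripleFamily {α : Type*} [DecidableEq α] (A : Finset α) (T : Finset (Finset α)) : Prop :=
  ∀ t ∈ T, t ⊆ A ∧ t.card = 3

/-- The 2-element subsets of `A` not contained in any member of `T`. -/
def uncoveredPairs {α : Type*} [DecidableEq α] (A : Finset α) (T : Finset (Finset α)) :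
    Finset (Finset α) :=
  (A.powersetCard 2).filter fun p => ∀ t ∈ T, ¬ p ⊆ t

/-- The weight of a triple family: number of triples plus half the number of uncovered pairs. -/
def weight {α : Type*} [DecidableEq α] (A : Finset α) (T : Finset (Finset α)) : ℚ :=
  T.card + (uncoveredPairs A T).card / 2

/-- `C_*(a)`: the minimum weight of a triple family on an `a`-element set
(computed as half the minimum of the doubled weights, which are natural numbers). -/
noncomputable def Cstar2 (a : ℕ) : ℕ :=
  sInf {n : ℕ | ∃ T : Finset (Finset ℕ), IsTripleFamily (Finset.range a) T ∧
      2 * T.card + (uncoveredPairs (Finset.range a) T).card = n}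

noncomputable def Cstar (a : ℕ) : ℚ := (Cstar2 a : ℚ) / 2

/-- `T` is a covering of the pairs of `A` by triples. -/
def IsCover {α : Type*} [DecidableEq α] (A : Finset α) (T : Finset (Finset α)) : Prop :=
  IsTripleFamily A T ∧ ∀ p ⊆ A, p.card = 2 → ∃ t ∈ T, p ⊆ t

/-- `C(a) = C(a,3,2)`: the minimum size of a covering of pairs by triples on `a` elements. -/
noncomputable def coverNum (a : ℕ) : ℕ :=
  sInf {n | ∃ T : Finset (Finset ℕ), IsCover (Finset.range a) T ∧ T.card = n}

/-- An `(A,B)`-system: a family of 4-element subsets of `A ∪ B` covering every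
3-element subset with at least two elements in `A`. -/
def IsABSystem {α : Type*} [DecidableEq α] (A B : Finset α) (Q : Finset (Finset α)) : Prop :=
  (∀ q ∈ Q, q ⊆ A ∪ B ∧ q.card = 4) ∧
  ∀ T ⊆ A ∪ B, T.card = 3 → 2 ≤ (T ∩ A).card → ∃ q ∈ Q, T ⊆ q

/-- `f(a,b)`: the minimum size of an `(A,B)`-system with `|A| = a`, `|B| = b`. -/
noncomputable def fAB (a b : ℕ) : ℕ :=
  sInf {n | ∃ Q : Finset (Finset ℕ),
    IsABSystem (Finset.range a) (Finset.Ico a (a + b)) Q ∧ Q.card = n}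


namespace FH

def enc (t x i : ℕ) : ℕ := 2*t*i + x

lemma enc_lt {t x i : ℕ} (hx : x < 2*t) (hi : i < 3) : enc t x i < 6*t := by
  unfold enc; interval_cases i <;> omega

lemma enc_inj {t x i y j : ℕ} (hx : x < 2*t) (hy : y < 2*t) (hi : i < 3) (hj : j < 3)
    (h : enc t x i = enc t y j) : x = y ∧ i = j := by
  unfold enc at h; interval_cases i <;> interval_cases j <;> omega

lemma enc_decomp {t P : ℕ} (ht : 1 ≤ t) (hP : P < 6*t) :
    P = enc t (P % (2*t)) (P / (2*t)) ∧ P % (2*t) < 2*t ∧ P / (2*t) < 3 := by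
  have h2t : 0 < 2*t := by omega
  refine ⟨?_, Nat.mod_lt _ h2t, ?_⟩
  · unfold enc; exact (Nat.div_add_mod P (2*t)).symm
  · rw [Nat.div_lt_iff_lt_mul h2t]; omega

/-- half-idempotent-style quasigroup bijections -/
def hq (c t s : ℕ) : ℕ := if s % 2 = 0 then (s/2 + c) % t else t + s/2

def hqi (c t w : ℕ) : ℕ := if w < t then 2*((w + t - c % t) % t) else 2*(w-t)+1

lemma hq_lt {c t s : ℕ} (ht : 1 ≤ t) (hs : s < 2*t) : hq c t s < 2*t := by
  unfold hq; split_ifs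
  · have := Nat.mod_lt (s/2 + c) (show 0 < t by omega); omega
  · omega

lemma hqi_lt {c t w : ℕ} (ht : 1 ≤ t) (hw : w < 2*t) : hqi c t w < 2*t := by
  unfold hqi; split_ifs with h
  · have := Nat.mod_lt (w + t - c % t) (show 0 < t by omega); omega
  · omega

lemma hq_hqi {c t w : ℕ} (ht : 1 ≤ t) (hw : w < 2*t) : hq c t (hqi c t w) = w := by
  have ht0 : 0 < t := by omega
  have hcm : c % t < t := Nat.mod_lt _ ht0
  unfold hq hqi
  split_ifs with hlt heven heven
  · -- w < t, even branch
    have hr : (w + t - c % t) % t < t := Nat.mod_lt _ ht0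
    have he : 2*((w + t - c % t) % t) / 2 = (w + t - c % t) % t := by omega
    rw [he]
    rcases le_or_gt (c % t) w with hc | hc
    · have e1 : w + t - c % t = (w - c % t) + t := by omega
      rw [e1, Nat.add_mod_right, Nat.mod_eq_of_lt (show w - c % t < t by omega)]
      have e2 : w - c % t + c = w + t * (c / t) := by
        have := Nat.div_add_mod c t; omega
      rw [e2, Nat.add_mul_mod_self_left, Nat.mod_eq_of_lt hlt]
    · have e1 : w + t - c % t < t := by omega
      rw [Nat.mod_eq_of_lt e1]
      have e2 : w + t - c % t + c = w + t * (1 + c / t) := by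
        have h3 : t * (1 + c / t) = t + t * (c / t) := by ring
        have := Nat.div_add_mod c t; omega
      rw [e2, Nat.add_mul_mod_self_left, Nat.mod_eq_of_lt hlt]
  · exfalso; omega
  · exfalso; omega
  · -- w ≥ t
    have : (2*(w-t)+1) / 2 = w - t := by omega
    omega


lemma hq_diag {c t x : ℕ} (ht : 1 ≤ t) : hq c t ((x+x) % (2*t)) = (x % t + c) % t := by
  have h1 : (x+x) % (2*t) = 2*(x % t) := by
    have h : x + x = 2*x := by ring
    rw [h, Nat.mul_mod_mul_left]
  rw [h1]; unfold hq
  have h2 : (2*(x % t)) % 2 = 0 := Nat.mul_mod_right 2 _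
  rw [if_pos h2]
  have h3 : 2*(x % t)/2 = x % t := by omega
  rw [h3]

lemma solve {c t x z : ℕ} (ht : 1 ≤ t) (hx : x < 2*t) (hz : z < 2*t) :
    ∃ ys < 2*t, hq c t ((x + ys) % (2*t)) = z := by
  set cc := hqi c t z with hcc
  have hcl : cc < 2*t := hqi_lt ht hz
  refine ⟨(cc + 2*t - x) % (2*t), Nat.mod_lt _ (by omega), ?_⟩
  have key : (x + (cc + 2*t - x) % (2*t)) % (2*t) = cc := by
    rcases le_or_gt x cc with h | h
    · have e1 : cc + 2*t - x = (cc - x) + 2*t := by omega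
      rw [e1, Nat.add_mod_right, Nat.mod_eq_of_lt (show cc - x < 2*t by omega)]
      have e2 : x + (cc - x) = cc := by omega
      rw [e2, Nat.mod_eq_of_lt hcl]
    · rw [Nat.mod_eq_of_lt (show cc + 2*t - x < 2*t by omega)]
      have e2 : x + (cc + 2*t - x) = cc + 2*t := by omega
      rw [e2, Nat.add_mod_right, Nat.mod_eq_of_lt hcl]
  rw [key, hcc]; exact hq_hqi ht hz

/-! block families -/

def blkS (t c x y i : ℕ) : Finset ℕ :=
  {enc t x i, enc t y i, enc t (hq c t ((x+y) % (2*t))) ((i+1)%3)}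

def typeII (t c : ℕ) : Finset (Finset ℕ) :=
  (((range (2*t)).sigma (fun y => range y)) ×ˢ range 3).image (fun q => blkS t c q.1.2 q.1.1 q.2)

lemma blkS_comm (t c x y i : ℕ) : blkS t c x y i = blkS t c y x i := by
  unfold blkS; rw [Nat.add_comm y x]; ext w
  simp only [Finset.mem_insert, Finset.mem_singleton]; tauto

lemma mem_typeII {t c x y i : ℕ} (hx : x < 2*t) (hy : y < 2*t) (hxy : x ≠ y) (hi : i < 3) :
    blkS t c x y i ∈ typeII t c := by
  rcases lt_or_gt_of_ne hxy with h | h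
  · exact mem_image.mpr ⟨⟨⟨y, x⟩, i⟩,
      by simp only [Finset.mem_product, Finset.mem_sigma, mem_range]; exact ⟨⟨hy, h⟩, hi⟩, rfl⟩
  · rw [blkS_comm]
    exact mem_image.mpr ⟨⟨⟨x, y⟩, i⟩,
      by simp only [Finset.mem_product, Finset.mem_sigma, mem_range]; exact ⟨⟨hx, h⟩, hi⟩, rfl⟩

def patchA (t r i : ℕ) : Finset ℕ :=
  {enc t (t+r) i, enc t ((r+1)%t) ((i+1)%3), enc t ((r+2)%t) ((i+2)%3)}

def patchesA (t : ℕ) : Finset (Finset ℕ) := (range t ×ˢ range 3).image (fun p => patchA t p.1 p.2)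

def coverA (t : ℕ) : Finset (Finset ℕ) := typeII t 1 ∪ patchesA t

lemma mem_patchesA {t r i : ℕ} (hr : r < t) (hi : i < 3) : patchA t r i ∈ patchesA t :=
  mem_image.mpr ⟨⟨r, i⟩, by simp only [Finset.mem_product, mem_range]; exact ⟨hr, hi⟩, rfl⟩

def typeIB (t : ℕ) : Finset (Finset ℕ) :=
  (range t).image (fun x => ({enc t x 0, enc t x 1, enc t x 2} : Finset ℕ))

def patchB (t r i : ℕ) : Finset ℕ := {6*t, enc t (t+r) i, enc t r ((i+1)%3)}

def patchesB (t : ℕ) : Finset (Finset ℕ) := (range t ×ˢ range 3).image (fun p => patchB t p.1 p.2)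

def fanB (t : ℕ) : Finset (Finset ℕ) :=
  {({6*t+1, 6*t, enc t 0 0} : Finset ℕ)}
  ∪ (range (2*t)).image (fun x => ({6*t+1, enc t x 1, enc t x 2} : Finset ℕ))
  ∪ (range (t-1)).image (fun k => ({6*t+1, enc t (2*k+1) 0, enc t (2*k+2) 0} : Finset ℕ))
  ∪ {({6*t+1, enc t (2*t-1) 0, enc t 0 1} : Finset ℕ)}

def coverB (t : ℕ) : Finset (Finset ℕ) := typeIB t ∪ typeII t 0 ∪ patchesB t ∪ fanB t

lemma mem_patchesB {t r i : ℕ} (hr : r < t) (hi : i < 3) : patchB t r i ∈ patchesB t :=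
  mem_image.mpr ⟨⟨r, i⟩, by simp only [Finset.mem_product, mem_range]; exact ⟨hr, hi⟩, rfl⟩

/-! card bounds -/

lemma mul_id (t : ℕ) : 3*(t*(2*t-1)) + 3*t = 6*t^2 := by
  cases t with
  | zero => rfl
  | succ n =>
    have e : 2*(n+1)-1 = 2*n+1 := by omega
    rw [e]; ring

lemma card_typeII (t c : ℕ) : (typeII t c).card ≤ 3*(t*(2*t-1)) := by
  refine le_trans (card_image_le) ?_
  rw [Finset.card_product, Finset.card_sigma, card_range]
  have h2 : (∑ i ∈ range (2*t), i) * 2 = 2*t*(2*t-1) := by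
    simpa using Finset.sum_range_id_mul_two (2*t)
  have h3 : 2*t*(2*t-1) = 2*(t*(2*t-1)) := by
    cases t with
    | zero => rfl
    | succ n =>
      have e : 2*(n+1)-1 = 2*n+1 := by omega
      rw [e]; ring
  simp only [card_range]
  omega

lemma card_coverA (t : ℕ) : (coverA t).card ≤ 6*t^2 := by
  refine le_trans (card_union_le _ _) ?_
  have h1 := card_typeII t 1
  have h2 : (patchesA t).card ≤ t * 3 := le_trans card_image_le (by
    rw [Finset.card_product, card_range, card_range])
  have h3 := mul_id t
  omega

lemma card_coverB (t : ℕ) (ht : 1 ≤ t) : (coverB t).card ≤ 6*t^2 + 4*t + 1 := by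
  have h1 := card_typeII t 0
  have hI : (typeIB t).card ≤ t := le_trans card_image_le (by rw [card_range])
  have hP : (patchesB t).card ≤ t * 3 := le_trans card_image_le (by
    rw [Finset.card_product, card_range, card_range])
  have hF : (fanB t).card ≤ 1 + 2*t + (t-1) + 1 := by
    refine le_trans (card_union_le _ _) (add_le_add (le_trans (card_union_le _ _)
      (add_le_add (le_trans (card_union_le _ _) (add_le_add ?_ ?_)) ?_)) ?_)
    · exact le_of_eq (card_singleton _)
    · exact le_trans card_image_le (le_of_eq (card_range _))
    · exact le_trans card_image_le (le_of_eq (card_range _))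
    · exact le_of_eq (card_singleton _)
  have hsum : (coverB t).card ≤ (typeIB t).card + (typeII t 0).card + (patchesB t).card + (fanB t).card := by
    refine le_trans (card_union_le _ _) ?_
    have ha := card_union_le (typeIB t ∪ typeII t 0) (patchesB t)
    have hb := card_union_le (typeIB t) (typeII t 0)
    omega
  have h3 := mul_id t
  omega


/-! structure: blocks are triples inside the range -/

lemma card3 {a b c : ℕ} (h1 : a ≠ b) (h2 : a ≠ c) (h3 : b ≠ c) :
    ({a,b,c} : Finset ℕ).card = 3 := by
  rw [card_insert_of_notMem (by simp [h1, h2]), card_insert_of_notMem (by simp [h3]),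
    card_singleton]

lemma tri_sub {a b c n : ℕ} (h1 : a < n) (h2 : b < n) (h3 : c < n) :
    ({a,b,c} : Finset ℕ) ⊆ range n := by
  intro w hw; simp only [Finset.mem_insert, Finset.mem_singleton] at hw
  rcases hw with rfl|rfl|rfl <;> exact mem_range.mpr ‹_›

lemma enc_ne {t x i y j : ℕ} (hx : x < 2*t) (hy : y < 2*t) (hi : i < 3) (hj : j < 3)
    (h : ¬(x = y ∧ i = j)) : enc t x i ≠ enc t y j := fun he => h (enc_inj hx hy hi hj he)

lemma typeII_struct {t c : ℕ} (ht : 1 ≤ t) {n : ℕ} (hn : 6*t ≤ n) :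
    ∀ blk ∈ typeII t c, blk ⊆ range n ∧ blk.card = 3 := by
  intro blk h
  obtain ⟨⟨⟨y, x⟩, i⟩, hm, rfl⟩ := mem_image.mp h
  simp only [Finset.mem_product, Finset.mem_sigma, mem_range] at hm
  obtain ⟨⟨hy, hxy⟩, hi⟩ := hm
  have hx : x < 2*t := lt_trans hxy hy
  have hmod : (x+y) % (2*t) < 2*t := Nat.mod_lt _ (by omega)
  have hz := hq_lt (c := c) ht hmod
  dsimp only
  refine ⟨?_, ?_⟩
  · refine tri_sub ?_ ?_ ?_
    · exact lt_of_lt_of_le (enc_lt hx hi) hn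
    · exact lt_of_lt_of_le (enc_lt hy hi) hn
    · exact lt_of_lt_of_le (enc_lt hz (by omega)) hn
  · exact card3 (enc_ne hx hy hi hi (by omega)) (enc_ne hx hz hi (by omega) (by omega))
      (enc_ne hy hz hi (by omega) (by omega))

lemma coverA_struct {t : ℕ} (ht : 1 ≤ t) :
    ∀ blk ∈ coverA t, blk ⊆ range (6*t) ∧ blk.card = 3 := by
  intro blk hb
  rcases mem_union.mp hb with h | h
  · exact typeII_struct ht le_rfl blk h
  · obtain ⟨⟨r, i⟩, hm, rfl⟩ := mem_image.mp h
    simp only [Finset.mem_product, mem_range] at hm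
    obtain ⟨hr, hi⟩ := hm
    have ht0 : 0 < t := ht
    have h1 : t + r < 2*t := by omega
    have h2 : (r+1) % t < 2*t := by have := Nat.mod_lt (r+1) ht0; omega
    have h3 : (r+2) % t < 2*t := by have := Nat.mod_lt (r+2) ht0; omega
    unfold patchA
    refine ⟨tri_sub (enc_lt h1 hi) (enc_lt h2 (by omega)) (enc_lt h3 (by omega)), ?_⟩
    exact card3 (enc_ne h1 h2 hi (by omega) (by omega)) (enc_ne h1 h3 hi (by omega) (by omega))
      (enc_ne h2 h3 (by omega) (by omega) (by omega))

lemma coverB_struct {t : ℕ} (ht : 1 ≤ t) :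
    ∀ blk ∈ coverB t, blk ⊆ range (6*t+2) ∧ blk.card = 3 := by
  intro blk hb
  rcases mem_union.mp hb with h' | hfan
  · rcases mem_union.mp h' with h'' | hpatch
    · rcases mem_union.mp h'' with hI | hII
      · obtain ⟨x, hm, rfl⟩ := mem_image.mp hI
        simp only [mem_range] at hm
        have hx : x < 2*t := by omega
        refine ⟨tri_sub ?_ ?_ ?_, ?_⟩
        · have := enc_lt hx (show (0:ℕ) < 3 by omega); omega
        · have := enc_lt hx (show (1:ℕ) < 3 by omega); omega
        · have := enc_lt hx (show (2:ℕ) < 3 by omega); omega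
        · exact card3 (enc_ne hx hx (by omega) (by omega) (by omega))
            (enc_ne hx hx (by omega) (by omega) (by omega))
            (enc_ne hx hx (by omega) (by omega) (by omega))
      · exact typeII_struct ht (by omega) blk hII
    · obtain ⟨⟨r, i⟩, hm, rfl⟩ := mem_image.mp hpatch
      simp only [Finset.mem_product, mem_range] at hm
      obtain ⟨hr, hi⟩ := hm
      dsimp only
      have h1 : t + r < 2*t := by omega
      have h2 : r < 2*t := by omega
      have e1 := enc_lt h1 hi
      have e2 := enc_lt h2 (show (i+1)%3 < 3 by omega)
      unfold patchB
      refine ⟨tri_sub (by omega) (by omega) (by omega), ?_⟩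
      exact card3 (by omega) (by omega)
        (enc_ne h1 h2 hi (by omega) (by omega))
  · rcases mem_union.mp hfan with h' | hf4
    · rcases mem_union.mp h' with h'' | hf3
      · rcases mem_union.mp h'' with hf1 | hf2
        · simp only [Finset.mem_singleton] at hf1
          subst hf1
          have e := enc_lt (show (0:ℕ) < 2*t by omega) (show (0:ℕ) < 3 by omega)
          exact ⟨tri_sub (by omega) (by omega) (by omega), card3 (by omega) (by omega) (by omega)⟩
        · obtain ⟨x, hm, rfl⟩ := mem_image.mp hf2
          simp only [mem_range] at hm
          have e1 := enc_lt hm (show (1:ℕ) < 3 by omega)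
          have e2 := enc_lt hm (show (2:ℕ) < 3 by omega)
          refine ⟨tri_sub (by omega) (by omega) (by omega), ?_⟩
          exact card3 (by omega) (by omega) (enc_ne hm hm (by omega) (by omega) (by omega))
      · obtain ⟨k, hm, rfl⟩ := mem_image.mp hf3
        simp only [mem_range] at hm
        have hb1 : 2*k+1 < 2*t := by omega
        have hb2 : 2*k+2 < 2*t := by omega
        have e1 := enc_lt hb1 (show (0:ℕ) < 3 by omega)
        have e2 := enc_lt hb2 (show (0:ℕ) < 3 by omega)
        refine ⟨tri_sub (by omega) (by omega) (by omega), ?_⟩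
        exact card3 (by omega) (by omega) (enc_ne hb1 hb2 (by omega) (by omega) (by omega))
    · simp only [Finset.mem_singleton] at hf4
      subst hf4
      have e1 := enc_lt (show 2*t-1 < 2*t by omega) (show (0:ℕ) < 3 by omega)
      have e2 := enc_lt (show (0:ℕ) < 2*t by omega) (show (1:ℕ) < 3 by omega)
      refine ⟨tri_sub (by omega) (by omega) (by omega), ?_⟩
      exact card3 (by omega) (by omega)
        (enc_ne (by omega) (by omega) (by omega) (by omega) (by omega))


/-! coverage: class A -/

lemma crossA {t : ℕ} (ht : 2 ≤ t) {x z i : ℕ} (hx : x < 2*t) (hz : z < 2*t) (hi : i < 3) :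
    ∃ blk ∈ coverA t, enc t x i ∈ blk ∧ enc t z ((i+1)%3) ∈ blk := by
  have ht1 : (1:ℕ) ≤ t := by omega
  have ht0 : 0 < t := by omega
  obtain ⟨ys, hys, hsol⟩ := solve (c := 1) ht1 hx hz
  by_cases hyx : ys = x
  · rw [hyx, hq_diag ht1] at hsol
    by_cases hxt : t ≤ x
    · refine ⟨patchA t (x-t) i, mem_union_right _ (mem_patchesA (by omega) hi), ?_, ?_⟩
      · unfold patchA
        have e : t + (x - t) = x := by omega
        rw [e]; exact mem_insert_self _ _
      · unfold patchA
        have e : (x - t + 1) % t = z := by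
          rw [← hsol]
          congr 1
          have hxm : x % t = x - t := by
            rw [Nat.mod_eq_sub_mod hxt, Nat.mod_eq_of_lt (by omega)]
          omega
        rw [e]; exact mem_insert_of_mem (mem_insert_self _ _)
    · push_neg at hxt
      have hxx : x % t = x := Nat.mod_eq_of_lt hxt
      refine ⟨patchA t ((x+t-1) % t) ((i+2)%3),
        mem_union_right _ (mem_patchesA (Nat.mod_lt _ ht0) (by omega)), ?_, ?_⟩
      · unfold patchA
        have e1 : ((x+t-1) % t + 1) % t = x := by
          rcases Nat.eq_zero_or_pos x with h0 | h0
          · subst h0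
            rw [Nat.mod_eq_of_lt (show 0+t-1 < t by omega)]
            have e : 0+t-1+1 = t := by omega
            rw [e, Nat.mod_self]
          · have e : x+t-1 = (x-1)+t := by omega
            have einner : (x-1) % t = x-1 := Nat.mod_eq_of_lt (by omega)
            rw [e, Nat.add_mod_right, einner,
              (show x-1+1 = x by omega), Nat.mod_eq_of_lt hxt]
        have e2 : ((i+2)%3 + 1) % 3 = i := by omega
        rw [e1, e2]; exact mem_insert_of_mem (mem_insert_self _ _)
      · unfold patchA
        have e1 : ((x+t-1) % t + 2) % t = z := by
          rw [← hsol, hxx]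
          rcases Nat.eq_zero_or_pos x with h0 | h0
          · subst h0
            rw [Nat.mod_eq_of_lt (show 0+t-1 < t by omega)]
            have e : 0+t-1+2 = 1+t := by omega
            rw [e, Nat.add_mod_right]
          · have e : x+t-1 = (x-1)+t := by omega
            have einner : (x-1) % t = x-1 := Nat.mod_eq_of_lt (by omega)
            rw [e, Nat.add_mod_right, einner]
            congr 1
            omega
        have e2 : ((i+2)%3 + 2) % 3 = (i+1)%3 := by omega
        rw [e1, e2]; exact mem_insert_of_mem (mem_insert_of_mem (mem_singleton_self _))
  · refine ⟨blkS t 1 x ys i,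
      mem_union_left _ (mem_typeII hx hys (fun h => hyx h.symm) hi), mem_insert_self _ _, ?_⟩
    unfold blkS
    rw [hsol]
    exact mem_insert_of_mem (mem_insert_of_mem (mem_singleton_self _))

lemma coverA_pair {t : ℕ} (ht : 2 ≤ t) {P Q : ℕ} (hP : P < 6*t) (hQ : Q < 6*t) (hne : P ≠ Q) :
    ∃ blk ∈ coverA t, P ∈ blk ∧ Q ∈ blk := by
  have ht1 : (1:ℕ) ≤ t := by omega
  obtain ⟨hPe, hPx, hPi⟩ := enc_decomp ht1 hP
  obtain ⟨hQe, hQx, hQi⟩ := enc_decomp ht1 hQ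
  have key : ∀ i j : ℕ, i < 3 → j < 3 → (i = j ∨ j = (i+1)%3 ∨ i = (j+1)%3) := by
    intro i j hi hj; interval_cases i <;> interval_cases j <;> omega
  rcases key _ _ hPi hQi with hc | hc | hc
  · have hxy : P % (2*t) ≠ Q % (2*t) := by
      intro h; apply hne; rw [hPe, hQe, h, hc]
    refine ⟨blkS t 1 (P % (2*t)) (Q % (2*t)) (P / (2*t)),
      mem_union_left _ (mem_typeII hPx hQx hxy hPi), ?_, ?_⟩
    · unfold blkS; rw [← hPe]; exact mem_insert_self _ _
    · unfold blkS
      nth_rewrite 2 [hc]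
      rw [← hQe]
      exact mem_insert_of_mem (mem_insert_self _ _)
  · obtain ⟨blk, hb, h1, h2⟩ := crossA ht hPx hQx hPi (z := Q % (2*t))
    refine ⟨blk, hb, ?_, ?_⟩
    · rw [hPe]; exact h1
    · rw [hQe, hc]; exact h2
  · obtain ⟨blk, hb, h1, h2⟩ := crossA ht hQx hPx hQi (z := P % (2*t))
    refine ⟨blk, hb, ?_, ?_⟩
    · rw [hPe, hc]; exact h2
    · rw [hQe]; exact h1

theorem isCoverA {t : ℕ} (ht : 2 ≤ t) : IsCover (range (6*t)) (coverA t) := by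
  constructor
  · intro blk h; exact coverA_struct (by omega) blk h
  · intro p hp hc
    obtain ⟨P, Q, hne, rfl⟩ := card_eq_two.mp hc
    rw [insert_subset_iff, singleton_subset_iff] at hp
    obtain ⟨hP, hQ⟩ := hp
    rw [mem_range] at hP hQ
    obtain ⟨blk, hb, h1, h2⟩ := coverA_pair ht hP hQ hne
    exact ⟨blk, hb, by rw [insert_subset_iff, singleton_subset_iff]; exact ⟨h1, h2⟩⟩

theorem coverNum_0mod6 {t : ℕ} (ht : 2 ≤ t) : coverNum (6*t) ≤ 6*t^2 :=
  le_trans (Nat.sInf_le ⟨coverA t, isCoverA ht, rfl⟩) (card_coverA t)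


/-! coverage: class B -/

lemma memB_I {t x : ℕ} (hx : x < t) :
    ({enc t x 0, enc t x 1, enc t x 2} : Finset ℕ) ∈ coverB t :=
  mem_union_left _ (mem_union_left _ (mem_union_left _
    (mem_image.mpr ⟨x, mem_range.mpr hx, rfl⟩)))

lemma memB_II {t x y i : ℕ} (hx : x < 2*t) (hy : y < 2*t) (hxy : x ≠ y) (hi : i < 3) :
    blkS t 0 x y i ∈ coverB t :=
  mem_union_left _ (mem_union_left _ (mem_union_right _ (mem_typeII hx hy hxy hi)))

lemma memB_patch {t r i : ℕ} (hr : r < t) (hi : i < 3) : patchB t r i ∈ coverB t :=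
  mem_union_left _ (mem_union_right _ (mem_patchesB hr hi))

lemma memB_fan0 {t : ℕ} : ({6*t+1, 6*t, enc t 0 0} : Finset ℕ) ∈ coverB t :=
  mem_union_right _ (mem_union_left _ (mem_union_left _ (mem_union_left _
    (mem_singleton_self _))))

lemma memB_fan1 {t x : ℕ} (hx : x < 2*t) :
    ({6*t+1, enc t x 1, enc t x 2} : Finset ℕ) ∈ coverB t :=
  mem_union_right _ (mem_union_left _ (mem_union_left _ (mem_union_right _
    (mem_image.mpr ⟨x, mem_range.mpr hx, rfl⟩))))

lemma memB_fan2 {t k : ℕ} (hk : k < t-1) :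
    ({6*t+1, enc t (2*k+1) 0, enc t (2*k+2) 0} : Finset ℕ) ∈ coverB t :=
  mem_union_right _ (mem_union_left _ (mem_union_right _
    (mem_image.mpr ⟨k, mem_range.mpr hk, rfl⟩)))

lemma memB_fan3 {t : ℕ} : ({6*t+1, enc t (2*t-1) 0, enc t 0 1} : Finset ℕ) ∈ coverB t :=
  mem_union_right _ (mem_union_right _ (mem_singleton_self _))

lemma crossB {t : ℕ} (ht : 1 ≤ t) {x z i : ℕ} (hx : x < 2*t) (hz : z < 2*t) (hi : i < 3) :
    ∃ blk ∈ coverB t, enc t x i ∈ blk ∧ enc t z ((i+1)%3) ∈ blk := by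
  have ht0 : 0 < t := by omega
  obtain ⟨ys, hys, hsol⟩ := solve (c := 0) ht hx hz
  by_cases hyx : ys = x
  · rw [hyx, hq_diag ht] at hsol
    rw [Nat.add_zero, Nat.mod_eq_of_lt (Nat.mod_lt _ ht0)] at hsol
    by_cases hxt : t ≤ x
    · have hxm : x % t = x - t := by
        rw [Nat.mod_eq_sub_mod hxt, Nat.mod_eq_of_lt (by omega)]
      refine ⟨patchB t (x-t) i, memB_patch (by omega) hi, ?_, ?_⟩
      · unfold patchB
        have e : t + (x - t) = x := by omega
        rw [e]; exact mem_insert_of_mem (mem_insert_self _ _)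
      · unfold patchB
        have e : x - t = z := by omega
        rw [e]; exact mem_insert_of_mem (mem_insert_of_mem (mem_singleton_self _))
    · push_neg at hxt
      have hxm : x % t = x := Nat.mod_eq_of_lt hxt
      have hzx : z = x := by omega
      subst hzx
      refine ⟨{enc t z 0, enc t z 1, enc t z 2}, memB_I hxt, ?_, ?_⟩
      · interval_cases i <;> simp
      · have h3 : (i+1)%3 < 3 := by omega
        interval_cases i <;> simp
  · refine ⟨blkS t 0 x ys i, memB_II hx hys (fun h => hyx h.symm) hi,
      mem_insert_self _ _, ?_⟩
    unfold blkS
    rw [hsol]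
    exact mem_insert_of_mem (mem_insert_of_mem (mem_singleton_self _))

lemma infpairB {t : ℕ} (ht : 1 ≤ t) {w : ℕ} (hw : w < 6*t) :
    ∃ blk ∈ coverB t, 6*t ∈ blk ∧ w ∈ blk := by
  obtain ⟨hwe, hwx, hwi⟩ := enc_decomp ht hw
  by_cases hxt : t ≤ w % (2*t)
  · refine ⟨patchB t (w % (2*t) - t) (w / (2*t)), memB_patch (by omega) hwi,
      mem_insert_self _ _, ?_⟩
    unfold patchB
    have e : t + (w % (2*t) - t) = w % (2*t) := by omega
    rw [e, ← hwe]
    exact mem_insert_of_mem (mem_insert_self _ _)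
  · push_neg at hxt
    refine ⟨patchB t (w % (2*t)) ((w / (2*t) + 2) % 3), memB_patch hxt (by omega),
      mem_insert_self _ _, ?_⟩
    unfold patchB
    have key3 : ∀ j : ℕ, j < 3 → ((j+2)%3+1)%3 = j := by
      intro j hj; interval_cases j <;> rfl
    have e : ((w / (2*t) + 2) % 3 + 1) % 3 = w / (2*t) := key3 _ hwi
    rw [e, ← hwe]
    exact mem_insert_of_mem (mem_insert_of_mem (mem_singleton_self _))

lemma inf2pairB {t : ℕ} (ht : 1 ≤ t) {w : ℕ} (hw : w < 6*t+1) :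
    ∃ blk ∈ coverB t, 6*t+1 ∈ blk ∧ w ∈ blk := by
  by_cases hw6 : w = 6*t
  · subst hw6
    exact ⟨_, memB_fan0, mem_insert_self _ _, mem_insert_of_mem (mem_insert_self _ _)⟩
  · have hw' : w < 6*t := by omega
    obtain ⟨hwe, hwx, hwi⟩ := enc_decomp ht hw'
    set y := w % (2*t) with hydef
    set j := w / (2*t) with hjdef
    interval_cases j
    · -- level 0
      by_cases hy0 : y = 0
      · refine ⟨_, memB_fan0 (t := t), mem_insert_self _ _, ?_⟩
        rw [hwe, hy0]
        exact mem_insert_of_mem (mem_insert_of_mem (mem_singleton_self _))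
      · rcases Nat.even_or_odd y with he | ho
        · -- even, ≥ 2 : y = 2k+2 with k = y/2-1 < t-1
          obtain ⟨m, hm⟩ := he
          refine ⟨_, memB_fan2 (t := t) (k := m - 1) (by omega), mem_insert_self _ _, ?_⟩
          have e : 2*(m-1)+2 = y := by omega
          rw [e, hwe]
          exact mem_insert_of_mem (mem_insert_of_mem (mem_singleton_self _))
        · obtain ⟨m, hm⟩ := ho
          by_cases hlast : y = 2*t-1
          · refine ⟨_, memB_fan3 (t := t), mem_insert_self _ _, ?_⟩
            rw [hwe, hlast]
            exact mem_insert_of_mem (mem_insert_self _ _)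
          · refine ⟨_, memB_fan2 (t := t) (k := m) (by omega), mem_insert_self _ _, ?_⟩
            have e : 2*m+1 = y := by omega
            rw [e, hwe]
            exact mem_insert_of_mem (mem_insert_self _ _)
    · refine ⟨_, memB_fan1 hwx, mem_insert_self _ _, ?_⟩
      rw [hwe]
      exact mem_insert_of_mem (mem_insert_self _ _)
    · refine ⟨_, memB_fan1 hwx, mem_insert_self _ _, ?_⟩
      rw [hwe]
      exact mem_insert_of_mem (mem_insert_of_mem (mem_singleton_self _))

lemma coverB_pair {t : ℕ} (ht : 1 ≤ t) {P Q : ℕ} (hP : P < 6*t+2) (hQ : Q < 6*t+2)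
    (hne : P ≠ Q) : ∃ blk ∈ coverB t, P ∈ blk ∧ Q ∈ blk := by
  by_cases hP2 : P = 6*t+1
  · obtain ⟨blk, hb, h1, h2⟩ := inf2pairB ht (w := Q) (by omega)
    exact ⟨blk, hb, by rw [hP2]; exact h1, h2⟩
  by_cases hQ2 : Q = 6*t+1
  · obtain ⟨blk, hb, h1, h2⟩ := inf2pairB ht (w := P) (by omega)
    exact ⟨blk, hb, h2, by rw [hQ2]; exact h1⟩
  by_cases hP1 : P = 6*t
  · obtain ⟨blk, hb, h1, h2⟩ := infpairB ht (w := Q) (by omega)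
    exact ⟨blk, hb, by rw [hP1]; exact h1, h2⟩
  by_cases hQ1 : Q = 6*t
  · obtain ⟨blk, hb, h1, h2⟩ := infpairB ht (w := P) (by omega)
    exact ⟨blk, hb, h2, by rw [hQ1]; exact h1⟩
  · have hP' : P < 6*t := by omega
    have hQ' : Q < 6*t := by omega
    obtain ⟨hPe, hPx, hPi⟩ := enc_decomp ht hP'
    obtain ⟨hQe, hQx, hQi⟩ := enc_decomp ht hQ'
    have key : ∀ i j : ℕ, i < 3 → j < 3 → (i = j ∨ j = (i+1)%3 ∨ i = (j+1)%3) := by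
      intro i j hi hj; interval_cases i <;> interval_cases j <;> omega
    rcases key _ _ hPi hQi with hc | hc | hc
    · have hxy : P % (2*t) ≠ Q % (2*t) := by
        intro h; apply hne; rw [hPe, hQe, h, hc]
      refine ⟨blkS t 0 (P % (2*t)) (Q % (2*t)) (P / (2*t)), memB_II hPx hQx hxy hPi, ?_, ?_⟩
      · unfold blkS; rw [← hPe]; exact mem_insert_self _ _
      · unfold blkS
        nth_rewrite 2 [hc]
        rw [← hQe]
        exact mem_insert_of_mem (mem_insert_self _ _)
    · obtain ⟨blk, hb, h1, h2⟩ := crossB ht hPx hQx hPi (z := Q % (2*t))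
      refine ⟨blk, hb, ?_, ?_⟩
      · rw [hPe]; exact h1
      · rw [hQe, hc]; exact h2
    · obtain ⟨blk, hb, h1, h2⟩ := crossB ht hQx hPx hQi (z := P % (2*t))
      refine ⟨blk, hb, ?_, ?_⟩
      · rw [hPe, hc]; exact h2
      · rw [hQe]; exact h1

theorem isCoverB {t : ℕ} (ht : 1 ≤ t) : IsCover (range (6*t+2)) (coverB t) := by
  constructor
  · intro blk h; exact coverB_struct ht blk h
  · intro p hp hc
    obtain ⟨P, Q, hne, rfl⟩ := card_eq_two.mp hc
    rw [insert_subset_iff, singleton_subset_iff] at hp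
    obtain ⟨hP, hQ⟩ := hp
    rw [mem_range] at hP hQ
    obtain ⟨blk, hb, h1, h2⟩ := coverB_pair ht hP hQ hne
    exact ⟨blk, hb, by rw [insert_subset_iff, singleton_subset_iff]; exact ⟨h1, h2⟩⟩

theorem coverNum_2mod6 {t : ℕ} (ht : 1 ≤ t) : coverNum (6*t+2) ≤ 6*t^2+4*t+1 :=
  le_trans (Nat.sInf_le ⟨coverB t, isCoverB ht, rfl⟩) (card_coverB t ht)


def cover6 : Finset (Finset ℕ) :=
  (range 6).image (fun i => ({i, (i+1)%6, (i+3)%6} : Finset ℕ))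

lemma isCover6 : IsCover (range 6) cover6 := by
  constructor
  · intro b hb
    revert b
    decide
  · intro p hp hc
    exact (by decide : ∀ p ∈ (range 6).powerset, p.card = 2 → ∃ t ∈ cover6, p ⊆ t) p
      (mem_powerset.mpr hp) hc

lemma coverNum6 : coverNum 6 ≤ 6 :=
  le_trans (Nat.sInf_le ⟨cover6, isCover6, rfl⟩)
    (le_trans card_image_le (le_of_eq (card_range 6)))

theorem cn0 {a : ℕ} (h0 : a % 6 = 0) (h6 : 6 ≤ a) : 6 * coverNum a ≤ a^2 := by
  obtain ⟨t, rfl⟩ : ∃ t, a = 6*t := ⟨a/6, by omega⟩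
  have ht : 1 ≤ t := by omega
  rcases eq_or_lt_of_le ht with h1 | h1
  · have h6' : 6*t = 6 := by omega
    rw [h6']
    have := coverNum6
    omega
  · have hc := coverNum_0mod6 (t := t) (by omega)
    have he : (6*t)^2 = 36*t^2 := by ring
    omega

theorem cn2 {a : ℕ} (h0 : a % 6 = 2) (h6 : 3 ≤ a) : 6 * coverNum a ≤ a^2 + 2 := by
  obtain ⟨t, rfl⟩ : ∃ t, a = 6*t+2 := ⟨a/6, by omega⟩
  have ht : 1 ≤ t := by omega
  have hc := coverNum_2mod6 ht
  have he : (6*t+2)^2 = 36*t^2 + 24*t + 4 := by ring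
  omega

end FH

namespace Count

variable (a b : ℕ) (Q : Finset (Finset ℕ))

def prs : Finset (Finset ℕ) := (range a).powersetCard 2
def Q3 : Finset (Finset ℕ) := Q.filter (fun q => (q ∩ range a).card = 3)
def Q2 : Finset (Finset ℕ) := Q.filter (fun q => (q ∩ range a).card = 2)
def Tx (x : ℕ) : Finset (Finset ℕ) :=
  ((Q3 a Q).filter (fun q => x ∈ q)).image (fun q => q ∩ range a)
def Ux (x : ℕ) : Finset (Finset ℕ) := uncoveredPairs (range a) (Tx a Q x)
def mp (p : Finset ℕ) : ℕ := ((Ico a (a+b)).filter (fun x => p ∈ Ux a Q x)).card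
def Dodd : ℕ := ((prs a).filter (fun p => mp a b Q p % 2 = 1)).card
def dvx (v x : ℕ) : ℕ := ((Tx a Q x).filter (fun τ => v ∈ τ)).card
def uvx (v x : ℕ) : ℕ := ((Ux a Q x).filter (fun p => v ∈ p)).card
def bad : Finset ℕ := (range a).filter (fun v => ∀ x ∈ Ico a (a+b), uvx a Q v x % 2 = 1)

lemma AB_disjoint : Disjoint (range a) (Ico a (a+b)) := by
  rw [Finset.disjoint_left]
  intro x hx hx'
  rw [mem_range] at hx
  rw [mem_Ico] at hx'
  omega

lemma AB_union : range a ∪ Ico a (a+b) = range (a+b) := by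
  ext x
  simp only [mem_union, mem_range, mem_Ico]
  omega

variable {a b Q} (hQ : IsABSystem (range a) (Ico a (a+b)) Q)

include hQ in
lemma q_split {q : Finset ℕ} (hq : q ∈ Q) :
    (q ∩ range a).card + (q ∩ Ico a (a+b)).card = 4 := by
  obtain ⟨hsub, hcard⟩ := hQ.1 q hq
  have h1 : q ∩ range a ∪ q ∩ Ico a (a+b) = q := by
    rw [← Finset.inter_union_distrib_left, Finset.inter_eq_left.mpr hsub]
  have h2 : Disjoint (q ∩ range a) (q ∩ Ico a (a+b)) :=
    (AB_disjoint a b).mono inter_subset_right inter_subset_right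
  have h3 : (q ∩ range a).card + (q ∩ Ico a (a+b)).card
      = ((q ∩ range a) ∪ (q ∩ Ico a (a+b))).card := (card_union_of_disjoint h2).symm
  rw [h3, h1, hcard]

lemma swap_count {α β : Type*} [DecidableEq α] [DecidableEq β] (s : Finset α) (u : Finset β)
    (r : α → β → Prop) [∀ x y, Decidable (r x y)] :
    ∑ x ∈ s, (u.filter (fun y => r x y)).card = ∑ y ∈ u, (s.filter (fun x => r x y)).card := by
  simp only [card_filter]
  rw [Finset.sum_comm]

lemma mem_Tx {τ x : ℕ → ℕ} : True := trivial

lemma mem_Tx' {τ : Finset ℕ} {x : ℕ} :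
    τ ∈ Tx a Q x ↔ ∃ q ∈ Q, x ∈ q ∧ (q ∩ range a).card = 3 ∧ q ∩ range a = τ := by
  simp only [Tx, Q3, mem_image, mem_filter, and_assoc]
  tauto

lemma Tx_triple {τ : Finset ℕ} {x : ℕ} (hτ : τ ∈ Tx a Q x) : τ ⊆ range a ∧ τ.card = 3 := by
  obtain ⟨q, hq, hxq, h3, rfl⟩ := mem_Tx'.mp hτ
  exact ⟨inter_subset_right, h3⟩

lemma mem_Ux' {p : Finset ℕ} {x : ℕ} :
    p ∈ Ux a Q x ↔ (p ⊆ range a ∧ p.card = 2) ∧ ∀ τ ∈ Tx a Q x, ¬ p ⊆ τ := by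
  unfold Ux uncoveredPairs
  rw [mem_filter, mem_powersetCard]

lemma Ux_prs {x : ℕ} : (prs a).filter (fun p => p ∈ Ux a Q x) = Ux a Q x := by
  ext p
  simp only [mem_filter, prs]
  constructor
  · exact fun h => h.2
  · intro h
    exact ⟨by
      have := (mem_Ux'.mp h).1
      rw [mem_powersetCard]
      exact this, h⟩

include hQ in
lemma edge_exists {x : ℕ} {p : Finset ℕ} (hx : x ∈ Ico a (a+b)) (hp : p ∈ Ux a Q x) :
    ∃ q ∈ Q2 a Q, q ∩ range a = p ∧ x ∈ q := by
  obtain ⟨⟨hpA, hp2⟩, hunc⟩ := mem_Ux'.mp hp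
  have hxA : x ∉ range a := by
    rw [mem_range]; rw [mem_Ico] at hx; omega
  have hxp : x ∉ p := fun h => hxA (hpA h)
  have hT3 : (insert x p).card = 3 := by rw [card_insert_of_notMem hxp, hp2]
  have hTsub : insert x p ⊆ range a ∪ Ico a (a+b) := by
    intro w hw
    rcases mem_insert.mp hw with rfl | hw'
    · exact mem_union_right _ hx
    · exact mem_union_left _ (hpA hw')
  have hTA : insert x p ∩ range a = p := by
    rw [Finset.insert_inter_of_notMem hxA, Finset.inter_eq_left.mpr hpA]
  obtain ⟨q, hq, hsub⟩ := hQ.2 (insert x p) hTsub hT3 (by rw [hTA, hp2])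
  have hpq : p ⊆ q ∩ range a := fun w hw =>
    mem_inter.mpr ⟨hsub (mem_insert_of_mem hw), hpA hw⟩
  have hxq : x ∈ q := hsub (mem_insert_self _ _)
  have hle : (q ∩ range a).card ≤ 3 := by
    have hs := q_split hQ hq
    have hmem : x ∈ q ∩ Ico a (a+b) := mem_inter.mpr ⟨hxq, hx⟩
    have : 1 ≤ (q ∩ Ico a (a+b)).card := card_pos.mpr ⟨x, hmem⟩
    omega
  have hge : 2 ≤ (q ∩ range a).card := hp2 ▸ card_le_card hpq
  by_cases h3 : (q ∩ range a).card = 3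
  · exact absurd hpq (hunc _ (mem_Tx'.mpr ⟨q, hq, hxq, h3, rfl⟩))
  · have h2 : (q ∩ range a).card = 2 := by omega
    exact ⟨q, mem_filter.mpr ⟨hq, h2⟩,
      (Finset.eq_of_subset_of_card_le hpq (by omega)).symm, hxq⟩


include hQ in
lemma L4 : (∑ p ∈ prs a, mp a b Q p) + Dodd a b Q ≤ 2 * (Q2 a Q).card := by
  have hfib : (Q2 a Q).card
      = ∑ p ∈ prs a, ((Q2 a Q).filter (fun q => q ∩ range a = p)).card := by
    apply card_eq_sum_card_fiberwise
    intro q hq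
    unfold prs
    rw [Finset.mem_coe, mem_powersetCard]
    exact ⟨inter_subset_right, (mem_filter.mp hq).2⟩
  have hple : ∀ p ∈ prs a,
      mp a b Q p ≤ 2 * ((Q2 a Q).filter (fun q => q ∩ range a = p)).card := by
    intro p hp
    unfold mp
    have hsub : (Ico a (a+b)).filter (fun x => p ∈ Ux a Q x) ⊆
        ((Q2 a Q).filter (fun q => q ∩ range a = p)).biUnion (fun q => q ∩ Ico a (a+b)) := by
      intro x hx
      obtain ⟨hxB, hxU⟩ := mem_filter.mp hx
      obtain ⟨q, hq, hqp, hxq⟩ := edge_exists hQ hxB hxU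
      exact mem_biUnion.mpr ⟨q, mem_filter.mpr ⟨hq, hqp⟩, mem_inter.mpr ⟨hxq, hxB⟩⟩
    refine le_trans (card_le_card hsub) (le_trans card_biUnion_le ?_)
    refine le_trans (Finset.sum_le_sum (fun q hq => ?_))
      (le_of_eq (by rw [Finset.sum_const, smul_eq_mul, Nat.mul_comm]))
    have hq2 : q ∈ Q2 a Q := (mem_filter.mp hq).1
    have := q_split hQ (mem_filter.mp hq2).1
    have h2 := (mem_filter.mp hq2).2
    omega
  have hple2 : ∀ p ∈ prs a,
      mp a b Q p + (if mp a b Q p % 2 = 1 then 1 else 0)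
        ≤ 2 * ((Q2 a Q).filter (fun q => q ∩ range a = p)).card := by
    intro p hp
    have h1 := hple p hp
    split_ifs with h
    · omega
    · omega
  have hD : Dodd a b Q = ∑ p ∈ prs a, (if mp a b Q p % 2 = 1 then 1 else 0) := by
    unfold Dodd
    rw [card_filter]
  rw [hD, ← Finset.sum_add_distrib, hfib, Finset.mul_sum]
  exact Finset.sum_le_sum hple2

lemma pairs_at_v {v : ℕ} (hv : v ∈ range a) :
    ((prs a).filter (fun p => v ∈ p)).card = a - 1 := by
  have himg : (prs a).filter (fun p => v ∈ p)
      = ((range a).erase v).image (fun w => ({v, w} : Finset ℕ)) := by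
    ext p
    simp only [mem_filter, prs, mem_powersetCard, mem_image, mem_erase]
    constructor
    · rintro ⟨⟨hpA, hp2⟩, hvp⟩
      obtain ⟨c, d, hcd, rfl⟩ := card_eq_two.mp hp2
      rcases mem_insert.mp hvp with rfl | hd
      · exact ⟨d, ⟨fun h => hcd h.symm, hpA (by simp)⟩, rfl⟩
      · rw [mem_singleton] at hd
        subst hd
        exact ⟨c, ⟨fun h => hcd h, hpA (by simp)⟩, Finset.pair_comm v c⟩
    · rintro ⟨w, ⟨hwv, hwA⟩, rfl⟩
      refine ⟨⟨?_, ?_⟩, by simp⟩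
      · intro u hu
        rcases mem_insert.mp hu with rfl | hu'
        · exact hv
        · rw [mem_singleton] at hu'; subst hu'; exact hwA
      · rw [card_insert_of_notMem (by
          intro h; rw [mem_singleton] at h; exact hwv h.symm), card_singleton]
  rw [himg, Finset.card_image_of_injOn, card_erase_of_mem hv, card_range]
  intro w1 h1 w2 h2 he
  have he' : ({v, w1} : Finset ℕ) = {v, w2} := he
  have hw1 : w1 ∈ ({v, w2} : Finset ℕ) := by rw [← he']; simp
  rcases mem_insert.mp hw1 with h | h
  · exact absurd h (mem_erase.mp (Finset.mem_coe.mp h1)).1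
  · rwa [mem_singleton] at h


lemma uvx_eq {v x : ℕ} :
    uvx a Q v x = ((prs a).filter (fun p => v ∈ p ∧ p ∈ Ux a Q x)).card := by
  unfold uvx
  congr 1
  ext p
  simp only [mem_filter]
  constructor
  · intro ⟨h1, h2⟩
    refine ⟨?_, h2, h1⟩
    unfold prs
    rw [mem_powersetCard]
    exact (mem_Ux'.mp h1).1
  · exact fun ⟨h1, h2, h3⟩ => ⟨h3, h2⟩

lemma uvx_split {v x : ℕ} (hv : v ∈ range a) :
    uvx a Q v x + ((prs a).filter (fun p => v ∈ p ∧ p ∉ Ux a Q x)).card = a - 1 := by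
  rw [uvx_eq, ← pairs_at_v hv]
  have h1 := Finset.card_filter_add_card_filter_not
    (s := (prs a).filter (fun p => v ∈ p)) (p := fun p => p ∈ Ux a Q x)
  rw [Finset.filter_filter, Finset.filter_filter] at h1
  exact h1

lemma cv_le {v x : ℕ} :
    ((prs a).filter (fun p => v ∈ p ∧ p ∉ Ux a Q x)).card ≤ 2 * dvx a Q v x := by
  have hsub : (prs a).filter (fun p => v ∈ p ∧ p ∉ Ux a Q x) ⊆
      ((Tx a Q x).filter (fun τ => v ∈ τ)).biUnion
        (fun τ => (τ.erase v).image (fun w => ({v, w} : Finset ℕ))) := by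
    intro p hp
    obtain ⟨hp1, hp2, hp3⟩ := mem_filter.mp hp
    have hpp : p ⊆ range a ∧ p.card = 2 := by
      unfold prs at hp1
      rwa [mem_powersetCard] at hp1
    have hex : ∃ τ ∈ Tx a Q x, p ⊆ τ := by
      by_contra hno
      push_neg at hno
      exact hp3 (mem_Ux'.mpr ⟨hpp, hno⟩)
    obtain ⟨τ, hτ, hpτ⟩ := hex
    obtain ⟨c, d, hcd, hpe⟩ := card_eq_two.mp hpp.2
    have hvcd : v = c ∨ v = d := by
      subst hpe
      rcases mem_insert.mp hp2 with h | h
      · exact Or.inl h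
      · exact Or.inr (mem_singleton.mp h)
    obtain ⟨w, hwv, hpw⟩ : ∃ w, w ≠ v ∧ p = {v, w} := by
      rcases hvcd with rfl | rfl
      · exact ⟨d, fun h => hcd h.symm, hpe⟩
      · exact ⟨c, fun h => hcd h, by rw [hpe, Finset.pair_comm]⟩
    refine mem_biUnion.mpr ⟨τ, mem_filter.mpr ⟨hτ, hpτ hp2⟩, mem_image.mpr ⟨w, ?_, hpw.symm⟩⟩
    refine mem_erase.mpr ⟨hwv, hpτ ?_⟩
    rw [hpw]
    simp
  refine le_trans (card_le_card hsub) (le_trans card_biUnion_le ?_)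
  unfold dvx
  refine le_trans (Finset.sum_le_sum (fun τ hτ => ?_))
    (le_of_eq (by rw [Finset.sum_const, smul_eq_mul, Nat.mul_comm]))
  obtain ⟨hτT, hvτ⟩ := mem_filter.mp hτ
  have h3 := (Tx_triple hτT).2
  refine le_trans card_image_le ?_
  rw [card_erase_of_mem hvτ, h3]

lemma vertex_ineq {v x : ℕ} (hv : v ∈ range a) (ha2 : a % 2 = 0) :
    2*a - 1 ≤ 4 * dvx a Q v x + 3 * uvx a Q v x
      ∧ (uvx a Q v x % 2 = 0 → 2*a ≤ 4 * dvx a Q v x + 3 * uvx a Q v x) := by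
  have h1 := uvx_split (a := a) (Q := Q) (v := v) (x := x) hv
  have h2 := cv_le (a := a) (Q := Q) (v := v) (x := x)
  have ha1 : 1 ≤ a := by rw [mem_range] at hv; omega
  omega

lemma sum_dvx {x : ℕ} : ∑ v ∈ range a, dvx a Q v x = 3 * (Tx a Q x).card := by
  unfold dvx
  rw [swap_count]
  have h1 : ∀ τ ∈ Tx a Q x, ((range a).filter (fun v => v ∈ τ)).card = 3 := by
    intro τ hτ
    rw [Finset.filter_mem_eq_inter, Finset.inter_eq_right.mpr (Tx_triple hτ).1]
    exact (Tx_triple hτ).2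
  rw [Finset.sum_congr rfl h1, Finset.sum_const, smul_eq_mul, Nat.mul_comm]

lemma sum_uvx {x : ℕ} : ∑ v ∈ range a, uvx a Q v x = 2 * (Ux a Q x).card := by
  unfold uvx
  rw [swap_count]
  have h1 : ∀ p ∈ Ux a Q x, ((range a).filter (fun v => v ∈ p)).card = 2 := by
    intro p hp
    rw [Finset.filter_mem_eq_inter, Finset.inter_eq_right.mpr (mem_Ux'.mp hp).1.1]
    exact (mem_Ux'.mp hp).1.2
  rw [Finset.sum_congr rfl h1, Finset.sum_const, smul_eq_mul, Nat.mul_comm]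

lemma sum_mp_v {v : ℕ} :
    ∑ x ∈ Ico a (a+b), uvx a Q v x = ∑ p ∈ (prs a).filter (fun p => v ∈ p), mp a b Q p := by
  have h1 : ∀ x ∈ Ico a (a+b), uvx a Q v x
      = ((prs a).filter (fun p => v ∈ p ∧ p ∈ Ux a Q x)).card := fun x _ => uvx_eq
  rw [Finset.sum_congr rfl h1]
  rw [show (∑ x ∈ Ico a (a+b), ((prs a).filter (fun p => v ∈ p ∧ p ∈ Ux a Q x)).card)
      = ∑ p ∈ prs a, ((Ico a (a+b)).filter (fun x => v ∈ p ∧ p ∈ Ux a Q x)).card from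
    swap_count _ _ _]
  rw [Finset.sum_filter]
  apply Finset.sum_congr rfl
  intro p hp
  by_cases hvp : v ∈ p
  · rw [if_pos hvp]
    unfold mp
    congr 1
    ext x
    simp [hvp]
  · rw [if_neg hvp]
    have : (Ico a (a+b)).filter (fun x => v ∈ p ∧ p ∈ Ux a Q x) = ∅ := by
      apply Finset.filter_false_of_mem
      intro x hx
      simp [hvp]
    rw [this, card_empty]


lemma perv (ha2 : a % 2 = 0) (hb1 : 1 ≤ b) {v : ℕ} (hv : v ∈ range a) :
    b*(2*a-1) + (if v ∈ bad a b Q then 0 else 1)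
      ≤ ∑ x ∈ Ico a (a+b), (4 * dvx a Q v x + 3 * uvx a Q v x) := by
  have hlb : ∀ x ∈ Ico a (a+b), 2*a-1 ≤ 4*dvx a Q v x + 3*uvx a Q v x :=
    fun x _ => (vertex_ineq hv ha2).1
  have hconst : ∑ _x ∈ Ico a (a+b), (2*a-1) = b * (2*a-1) := by
    rw [Finset.sum_const, smul_eq_mul, Nat.card_Ico]
    congr 1
    omega
  split_ifs with hbv
  · have h := Finset.sum_le_sum hlb
    rw [hconst] at h
    omega
  · have hex : ∃ x₀ ∈ Ico a (a+b), uvx a Q v x₀ % 2 = 0 := by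
      unfold bad at hbv
      rw [mem_filter] at hbv
      push_neg at hbv
      obtain ⟨x₀, hx₀, hne⟩ := hbv hv
      exact ⟨x₀, hx₀, by omega⟩
    obtain ⟨x₀, hx₀B, hx₀e⟩ := hex
    have hsplit : (4*dvx a Q v x₀ + 3*uvx a Q v x₀)
        + ∑ x ∈ (Ico a (a+b)).erase x₀, (4*dvx a Q v x + 3*uvx a Q v x)
        = ∑ x ∈ Ico a (a+b), (4*dvx a Q v x + 3*uvx a Q v x) :=
      Finset.add_sum_erase (Ico a (a+b)) (fun x => 4*dvx a Q v x + 3*uvx a Q v x) hx₀B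
    have h₀ : 2*a ≤ 4*dvx a Q v x₀ + 3*uvx a Q v x₀ := (vertex_ineq hv ha2).2 hx₀e
    have hrest := Finset.sum_le_sum (fun x (hx : x ∈ (Ico a (a+b)).erase x₀) =>
      (vertex_ineq (a := a) (Q := Q) (x := x) hv ha2).1)
    rw [Finset.sum_const, card_erase_of_mem hx₀B, smul_eq_mul, Nat.card_Ico] at hrest
    have ha1 : 1 ≤ a := by rw [mem_range] at hv; omega
    have harith : b*(2*a-1) = (2*a-1) + (b-1)*(2*a-1) := by
      have e : b = 1 + (b-1) := by omega
      rw [e]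
      have e2 : 1 + (b - 1) - 1 = b - 1 := by omega
      rw [e2, Nat.add_mul, Nat.one_mul]
    have hc : a + b - a - 1 = b - 1 := by omega
    rw [hc] at hrest
    omega

lemma bad_le (hb : b % 2 = 1) : (bad a b Q).card ≤ 2 * Dodd a b Q := by
  have hsub : bad a b Q ⊆
      ((prs a).filter (fun p => mp a b Q p % 2 = 1)).biUnion (fun p => p) := by
    intro v hv
    obtain ⟨hvA, hodd⟩ := mem_filter.mp hv
    have hs : (∑ x ∈ Ico a (a+b), uvx a Q v x) % 2 = 1 := by
      rw [Finset.sum_nat_mod, Finset.sum_congr rfl hodd, Finset.sum_const, smul_eq_mul,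
        mul_one, Nat.card_Ico]
      omega
    rw [sum_mp_v] at hs
    by_contra hno
    have hall : ∀ p ∈ (prs a).filter (fun p => v ∈ p), mp a b Q p % 2 = 0 := by
      intro p hp
      by_contra h1
      exact hno (mem_biUnion.mpr ⟨p, mem_filter.mpr ⟨(mem_filter.mp hp).1, by omega⟩,
        (mem_filter.mp hp).2⟩)
    rw [Finset.sum_nat_mod, Finset.sum_congr rfl hall, Finset.sum_const, smul_eq_mul,
      mul_zero] at hs
    omega
  refine le_trans (card_le_card hsub) (le_trans card_biUnion_le ?_)
  unfold Dodd
  refine le_trans (Finset.sum_le_sum (fun p hp => ?_))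
    (le_of_eq (by rw [Finset.sum_const, smul_eq_mul, Nat.mul_comm]))
  have hp1 := (mem_filter.mp hp).1
  unfold prs at hp1
  rw [mem_powersetCard] at hp1
  omega

include hQ in
theorem master (ha : a % 6 = 0 ∨ a % 6 = 2) (hb : b % 2 = 1) :
    a*b*(2*a-1) + a + (if a % 6 = 2 then 4 else 0) ≤ 12 * Q.card := by
  classical
  have ha2 : a % 2 = 0 := by omega
  have hb1 : 1 ≤ b := by omega
  set W := ∑ x ∈ Ico a (a+b), (12 * (Tx a Q x).card + 6 * (Ux a Q x).card) with hWdef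
  have hWv : W = ∑ v ∈ range a, ∑ x ∈ Ico a (a+b), (4 * dvx a Q v x + 3 * uvx a Q v x) := by
    rw [hWdef, Finset.sum_comm]
    apply Finset.sum_congr rfl
    intro x _
    have e1 : ∑ v ∈ range a, (4*dvx a Q v x + 3*uvx a Q v x)
        = 4*(∑ v ∈ range a, dvx a Q v x) + 3*(∑ v ∈ range a, uvx a Q v x) := by
      rw [Finset.sum_add_distrib, Finset.mul_sum, Finset.mul_sum]
    rw [e1, sum_dvx, sum_uvx]
    ring
  have hind : ∑ v ∈ range a, (if v ∈ bad a b Q then 0 else 1)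
      = (range a).card - (bad a b Q).card := by
    have he : ∀ v ∈ range a, (if v ∈ bad a b Q then 0 else 1)
        = (if v ∉ bad a b Q then 1 else 0) := by
      intro v _
      by_cases h : v ∈ bad a b Q <;> simp [h]
    rw [Finset.sum_congr rfl he, ← Finset.card_filter]
    have hsplit := Finset.card_filter_add_card_filter_not
      (s := range a) (p := fun v => v ∈ bad a b Q)
    have hbadeq : (range a).filter (fun v => v ∈ bad a b Q) = bad a b Q := by
      ext v
      simp only [mem_filter]
      exact ⟨fun h => h.2, fun h => ⟨(mem_filter.mp h).1, h⟩⟩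
    rw [hbadeq] at hsplit
    omega
  have hWlb : a*(b*(2*a-1)) + ((range a).card - (bad a b Q).card) ≤ W := by
    rw [hWv, ← hind]
    have h1 := Finset.sum_le_sum
      (fun v (hv : v ∈ range a) => perv (a := a) (b := b) (Q := Q) ha2 hb1 hv)
    rw [Finset.sum_add_distrib, Finset.sum_const, smul_eq_mul, card_range] at h1
    exact h1
  have hn3 : ∑ x ∈ Ico a (a+b), (Tx a Q x).card ≤ (Q3 a Q).card := by
    have h1 : ∀ x ∈ Ico a (a+b), (Tx a Q x).card ≤ ((Q3 a Q).filter (fun q => x ∈ q)).card :=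
      fun x _ => card_image_le
    refine le_trans (Finset.sum_le_sum h1) ?_
    rw [swap_count]
    have h2 : ∀ q ∈ Q3 a Q, ((Ico a (a+b)).filter (fun x => x ∈ q)).card = 1 := by
      intro q hq
      have e : (Ico a (a+b)).filter (fun x => x ∈ q) = q ∩ Ico a (a+b) := by
        rw [Finset.filter_mem_eq_inter, Finset.inter_comm]
      rw [e]
      have h4 := q_split hQ (mem_filter.mp hq).1
      have h3 := (mem_filter.mp hq).2
      omega
    rw [Finset.sum_congr rfl h2, Finset.sum_const, smul_eq_mul, mul_one]
  have hsu : ∑ x ∈ Ico a (a+b), (Ux a Q x).card = ∑ p ∈ prs a, mp a b Q p := by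
    have h1 : ∀ x ∈ Ico a (a+b), (Ux a Q x).card
        = ((prs a).filter (fun p => p ∈ Ux a Q x)).card := by
      intro x _
      rw [Ux_prs]
    rw [Finset.sum_congr rfl h1, swap_count]
    rfl
  have hQ23 : (Q2 a Q).card + (Q3 a Q).card ≤ Q.card := by
    have hd : Disjoint (Q2 a Q) (Q3 a Q) := by
      rw [Finset.disjoint_left]
      intro q h2 h3
      have e2 := (mem_filter.mp h2).2
      have e3 := (mem_filter.mp h3).2
      omega
    rw [← card_union_of_disjoint hd]
    exact card_le_card (union_subset (filter_subset _ _) (filter_subset _ _))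
  have hL4 := L4 hQ
  have hbad := bad_le (a := a) (Q := Q) hb
  have hWsum : W = 12 * (∑ x ∈ Ico a (a+b), (Tx a Q x).card)
      + 6 * (∑ p ∈ prs a, mp a b Q p) := by
    rw [hWdef, Finset.sum_add_distrib, ← Finset.mul_sum, ← Finset.mul_sum, hsu]
  have hQW : W + 6 * Dodd a b Q ≤ 12 * Q.card := by
    omega
  have hM6 : (a*b*(2*a-1)) % 6 = 0 := by
    rcases ha with h0 | h2
    · obtain ⟨k, rfl⟩ : ∃ k, a = 6*k := ⟨a/6, by omega⟩
      have he : 6*k*b*(2*(6*k)-1) = 6*(k*b*(2*(6*k)-1)) := by ring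
      rw [he]
      omega
    · obtain ⟨k, rfl⟩ : ∃ k, a = 6*k+2 := ⟨a/6, by omega⟩
      have he : (6*k+2)*b*(2*(6*k+2)-1) = 6*((3*k+1)*b*(4*k+1)) := by
        have e : 2*(6*k+2)-1 = 12*k+3 := by omega
        rw [e]
        ring
      rw [he]
      omega
  have hW6 : W % 6 = 0 := by omega
  have hmul : a*(b*(2*a-1)) = a*b*(2*a-1) := by ring
  rw [hmul, card_range] at hWlb
  split_ifs with hc2
  · rcases Nat.eq_zero_or_pos (Dodd a b Q) with hD | hD
    · omega
    · omega
  · omega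


lemma system_exists (a b : ℕ) (h4 : 4 ≤ a + b) :
    IsABSystem (range a) (Ico a (a+b)) ((range (a+b)).powersetCard 4) := by
  constructor
  · intro q hq
    rw [mem_powersetCard] at hq
    rw [AB_union]
    exact ⟨hq.1, hq.2⟩
  · intro T hT h3 _
    rw [AB_union a b] at hT
    have hne : T ≠ range (a+b) := by
      intro h
      rw [h, card_range] at h3
      omega
    obtain ⟨w, hwR, hwT⟩ := Finset.exists_of_ssubset (lt_of_le_of_ne hT hne)
    refine ⟨insert w T, ?_, subset_insert _ _⟩
    rw [mem_powersetCard]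
    exact ⟨insert_subset_iff.mpr ⟨hwR, hT⟩, by rw [card_insert_of_notMem hwT, h3]⟩

theorem main12 (a b : ℕ) (ha : a % 6 = 0 ∨ a % 6 = 2) (hb : b % 2 = 1) (h4 : 4 ≤ a + b) :
    a*b*(2*a-1) + a + (if a % 6 = 2 then 4 else 0) ≤ 12 * fAB a b := by
  have hne : {n | ∃ Q : Finset (Finset ℕ),
      IsABSystem (range a) (Ico a (a+b)) Q ∧ Q.card = n}.Nonempty :=
    ⟨_, _, system_exists a b h4, rfl⟩
  obtain ⟨Q, hQ, hcard⟩ := Nat.sInf_mem hne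
  have he : fAB a b = Q.card := hcard.symm
  rw [he]
  exact master hQ ha hb

end Count

lemma coverNum_zero : coverNum 0 = 0 := by
  have h : IsCover (range 0) (∅ : Finset (Finset ℕ)) := by
    constructor
    · intro t ht
      exact absurd ht (Finset.notMem_empty t)
    · intro p hp h2
      exfalso
      have hp0 : p = ∅ := Finset.subset_empty.mp (by simpa using hp)
      rw [hp0] at h2
      simp at h2
  have h2 : coverNum 0 ≤ 0 := Nat.sInf_le ⟨∅, h, rfl⟩
  omega

lemma coverNum_two : coverNum 2 = 0 := by
  rw [coverNum, Nat.sInf_eq_zero]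
  right
  rw [Set.eq_empty_iff_forall_notMem]
  rintro n ⟨T, hT, hc⟩
  obtain ⟨t, htT, hpt⟩ := hT.2 {0, 1} (by decide) (by decide)
  have h1 := hT.1 t htT
  have h2 := Finset.card_le_card h1.1
  rw [h1.2, card_range] at h2
  omega

lemma cov_bound (a : ℕ) (ha : a % 6 = 0 ∨ a % 6 = 2) :
    12 * coverNum a ≤ 2*a^2 + (if a % 6 = 2 then 4 else 0) := by
  rcases ha with h0 | h2
  · rw [if_neg (by omega)]
    rcases Nat.eq_zero_or_pos a with rfl | hpos
    · rw [coverNum_zero]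
      norm_num
    · have h6 : 6 ≤ a := by omega
      have := FH.cn0 h0 h6
      omega
  · rw [if_pos h2]
    rcases Nat.lt_or_ge a 3 with hsm | hge
    · have ha2 : a = 2 := by omega
      subst ha2
      rw [coverNum_two]
      norm_num
    · have := FH.cn2 h2 hge
      omega

theorem f_lower_odd_b (a b : ℕ) (ha : a % 6 = 0 ∨ a % 6 = 2) (hb : Odd b) :
    ((b : ℚ) - 1) * ((2 * (a : ℚ)^2 - a) / 12) + (coverNum a : ℚ) ≤ (fAB a b : ℚ) := by
  have hb2 : b % 2 = 1 := Nat.odd_iff.mp hb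
  have hb1 : 1 ≤ b := by omega
  by_cases ha0 : a = 0
  · subst ha0
    rw [coverNum_zero]
    norm_num
  by_cases hab : a = 2 ∧ b = 1
  · obtain ⟨rfl, rfl⟩ := hab
    rw [coverNum_two]
    norm_num
  · have ha2 : 2 ≤ a := by rcases ha with h|h <;> omega
    have h4 : 4 ≤ a + b := by
      rcases ha with h|h
      · omega
      · rcases Nat.lt_or_ge a 3 with h'|h'
        · have he2 : a = 2 := by omega
          have hbne : b ≠ 1 := fun h1 => hab ⟨he2, h1⟩
          omega
        · omega
    have h12 := Count.main12 a b ha hb2 h4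
    have hcov := cov_bound a ha
    set ε : ℕ := if a % 6 = 2 then 4 else 0 with hε
    have hMQ : ((a*b*(2*a-1) : ℕ) : ℚ) = (a:ℚ)*(b:ℚ)*(2*(a:ℚ)-1) := by
      rw [Nat.cast_mul, Nat.cast_mul, Nat.cast_sub (by omega : 1 ≤ 2*a)]
      push_cast
      ring
    have h12Q : (a:ℚ)*(b:ℚ)*(2*(a:ℚ)-1) + (a:ℚ) + (ε:ℚ) ≤ 12 * (fAB a b : ℚ) := by
      rw [← hMQ]
      exact_mod_cast h12
    have hcovQ : 12 * (coverNum a : ℚ) ≤ 2*(a:ℚ)^2 + (ε:ℚ) := by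
      exact_mod_cast hcov
    have hring : ((b:ℚ)-1)*(2*(a:ℚ)^2 - (a:ℚ)) + (2*(a:ℚ)^2 + (ε:ℚ))
        = (a:ℚ)*(b:ℚ)*(2*(a:ℚ)-1) + (a:ℚ) + (ε:ℚ) := by
      have hbcast : (1:ℚ) ≤ (b:ℚ) := by exact_mod_cast hb1
      ring
    have key : ((b:ℚ)-1) * (2*(a:ℚ)^2 - (a:ℚ)) + 12*(coverNum a : ℚ)
        ≤ 12 * (fAB a b : ℚ) := by
      linarith
    have hgoal : ((b:ℚ)-1) * ((2*(a:ℚ)^2 - (a:ℚ))/12) + (coverNum a : ℚ)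
        = (((b:ℚ)-1) * (2*(a:ℚ)^2 - (a:ℚ)) + 12*(coverNum a : ℚ))/12 := by
      ring
    rw [hgoal, div_le_iff₀ (by norm_num : (0:ℚ) < 12)]
    linarith
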